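/- Let (Ω, P) be a probability space, τ ∈ (0,1), f₁ > 0 and f₀ > 0 real constants, and M₁, M₀ : Ω → ℝ square-integrable random variables. Define Σ = (τ − τ² − E[M₁²])/f₁² + (τ − τ² − E[M₀²])/f₀² + (1/2)·E[(M₁/f₁ − M₀/f₀)²] and Σᵖ = (τ − τ²)/f₁² + (τ − τ²)/f₀² − 2·E[M₁M₀]/(f₁f₀). Then Σᵖ − Σ = (1/2)·E[(M₁/f₁ − M₀/f₀)²] ≥ 0, so the naive multiplier bootstrap of the pairs is conservative. -/

import Mathlib

open MeasureTheory

/-- Comparison of the asymptotic variance of the QTE estimator under matched-pairs design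
(`Σ`) with the variance of the limit of the naive multiplier bootstrap of the pairs (`Σᵖ`):
`Σᵖ − Σ = (1/2)·E[(M₁/f₁ − M₀/f₀)²] ≥ 0`. -/
theorem variance_comparison_pairs_bootstrap
    {Ω : Type*} [MeasurableSpace Ω] (P : Measure Ω) [IsProbabilityMeasure P]
    (τ f₁ f₀ : ℝ) (hτ : τ ∈ Set.Ioo (0 : ℝ) 1) (hf₁ : 0 < f₁) (hf₀ : 0 < f₀)
    (M₁ M₀ : Ω → ℝ) (hM₁ : MemLp M₁ 2 P) (hM₀ : MemLp M₀ 2 P) :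
    ((τ - τ ^ 2) / f₁ ^ 2 + (τ - τ ^ 2) / f₀ ^ 2
        - 2 * (∫ ω, M₁ ω * M₀ ω ∂P) / (f₁ * f₀))
        - ((τ - τ ^ 2 - ∫ ω, (M₁ ω) ^ 2 ∂P) / f₁ ^ 2
            + (τ - τ ^ 2 - ∫ ω, (M₀ ω) ^ 2 ∂P) / f₀ ^ 2
            + (1 / 2) * ∫ ω, (M₁ ω / f₁ - M₀ ω / f₀) ^ 2 ∂P)
      = (1 / 2) * ∫ ω, (M₁ ω / f₁ - M₀ ω / f₀) ^ 2 ∂P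
    ∧ 0 ≤ (1 / 2) * ∫ ω, (M₁ ω / f₁ - M₀ ω / f₀) ^ 2 ∂P := by
  have h1 : Integrable (fun ω => (M₁ ω) ^ 2) P := hM₁.integrable_sq
  have h0 : Integrable (fun ω => (M₀ ω) ^ 2) P := hM₀.integrable_sq
  have h01 : Integrable (fun ω => M₁ ω * M₀ ω) P := by
    refine Integrable.mono' (((h1.add h0).const_mul (1 / 2)))
      (hM₁.aestronglyMeasurable.mul hM₀.aestronglyMeasurable)
      (ae_of_all _ fun ω => ?_)
    rw [Real.norm_eq_abs, abs_mul]
    simp only [Pi.add_apply]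
    nlinarith [sq_nonneg (|M₁ ω| - |M₀ ω|), sq_abs (M₁ ω), sq_abs (M₀ ω)]
  have key : (∫ ω, (M₁ ω / f₁ - M₀ ω / f₀) ^ 2 ∂P)
      = (∫ ω, (M₁ ω) ^ 2 ∂P) / f₁ ^ 2 + (∫ ω, (M₀ ω) ^ 2 ∂P) / f₀ ^ 2
        - 2 * (∫ ω, M₁ ω * M₀ ω ∂P) / (f₁ * f₀) := by
    have : (fun ω => (M₁ ω / f₁ - M₀ ω / f₀) ^ 2)
        = fun ω => ((M₁ ω) ^ 2 * (1 / f₁ ^ 2) + (M₀ ω) ^ 2 * (1 / f₀ ^ 2))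
          - M₁ ω * M₀ ω * (2 / (f₁ * f₀)) := by
      funext ω
      field_simp
      ring
    have hA : Integrable (fun ω => (M₁ ω) ^ 2 * (1 / f₁ ^ 2) + (M₀ ω) ^ 2 * (1 / f₀ ^ 2)) P :=
      (h1.mul_const _).add (h0.mul_const _)
    rw [this, integral_sub hA (h01.mul_const _),
      integral_add (h1.mul_const _) (h0.mul_const _),
      integral_mul_const, integral_mul_const, integral_mul_const]
    ring
  have hnn : 0 ≤ ∫ ω, (M₁ ω / f₁ - M₀ ω / f₀) ^ 2 ∂P :=
    integral_nonneg fun ω => sq_nonneg _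
  constructor
  · rw [key]; ring
  · positivity
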